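/- Let k be a field of characteristic 2, f = x^2 + y^2*z + y*z^2, m >= 6, and f^{(j)} as above. Then for 6 <= l <= m, modulo the ideal L_{322} = (x_0, x_1, x_2, y_0, y_1, z_0, z_1), f^{(l)} is congruent to f^{(l-6)}(x_3,...,x_{l-3}, y_2,...,y_{l-4}, z_2,...,z_{l-4}), i.e., the (l-6)-th coefficient polynomial with variables shifted by the weights (3,2,2). -/

import Mathlib

open Finset

/-- The variable `x_u` (resp. `y_v`, `z_w`) in `k[x_*, y_*, z_*]`. -/
noncomputable def xv (k : Type*) [Field k] (u : ℕ) : MvPolynomial (Fin 3 × ℕ) k :=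
  MvPolynomial.X (0, u)

noncomputable def yv (k : Type*) [Field k] (v : ℕ) : MvPolynomial (Fin 3 × ℕ) k :=
  MvPolynomial.X (1, v)

noncomputable def zv (k : Type*) [Field k] (w : ℕ) : MvPolynomial (Fin 3 × ℕ) k :=
  MvPolynomial.X (2, w)

/-- The series `∑_{i=0}^m c_i t^i`. -/
noncomputable def serUpTo (k : Type*) [Field k]
    (c : ℕ → MvPolynomial (Fin 3 × ℕ) k) (m : ℕ) :
    Polynomial (MvPolynomial (Fin 3 × ℕ) k) :=
  ∑ i ∈ Finset.range (m + 1), Polynomial.C (c i) * Polynomial.X ^ i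

/-- The coefficient polynomial `f^{(j)}`, where `f = x^2 + y^2 z + y z^2`:
the coefficient of `t^j` in `f(∑ x_i t^i, ∑ y_i t^i, ∑ z_i t^i)`. -/
noncomputable def fCoeff (k : Type*) [Field k] (m j : ℕ) :
    MvPolynomial (Fin 3 × ℕ) k :=
  ((serUpTo k (xv k) m) ^ 2
    + (serUpTo k (yv k) m) ^ 2 * serUpTo k (zv k) m
    + serUpTo k (yv k) m * (serUpTo k (zv k) m) ^ 2).coeff j

/-- The coefficient polynomial `g^{(j)}`, where `g = x^2 + y^2 z + y z^2 + x y z`. -/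
noncomputable def gCoeff (k : Type*) [Field k] (m j : ℕ) :
    MvPolynomial (Fin 3 × ℕ) k :=
  ((serUpTo k (xv k) m) ^ 2
    + (serUpTo k (yv k) m) ^ 2 * serUpTo k (zv k) m
    + serUpTo k (yv k) m * (serUpTo k (zv k) m) ^ 2
    + serUpTo k (xv k) m * serUpTo k (yv k) m * serUpTo k (zv k) m).coeff j

/-- The weight-shift renaming `x_i ↦ x_{i+3}`, `y_i ↦ y_{i+2}`, `z_i ↦ z_{i+2}`. -/
def wtShift : Fin 3 × ℕ → Fin 3 × ℕ :=
  fun p => (p.1, p.2 + if p.1 = 0 then 3 else 2)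

lemma coeff_mul_congr' {R : Type*} [CommRing R] (p₁ p₂ q₁ q₂ : Polynomial R) (n : ℕ)
    (h₁ : ∀ j ≤ n, p₁.coeff j = q₁.coeff j)
    (h₂ : ∀ j ≤ n, p₂.coeff j = q₂.coeff j) :
    (p₁ * p₂).coeff n = (q₁ * q₂).coeff n := by
  rw [Polynomial.coeff_mul, Polynomial.coeff_mul]
  refine Finset.sum_congr rfl fun x hx => ?_
  rw [Finset.HasAntidiagonal.mem_antidiagonal] at hx
  rw [h₁ x.1 (by omega), h₂ x.2 (by omega)]

lemma main_calc' {R : Type*} [CommRing R] (Px Py Pz Bx By Bz : Polynomial R) (l : ℕ) (hl6 : 6 ≤ l)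
    (keyx : ∀ j ≤ l, Px.coeff j = (Bx * Polynomial.X ^ 3).coeff j)
    (keyy : ∀ j ≤ l, Py.coeff j = (By * Polynomial.X ^ 2).coeff j)
    (keyz : ∀ j ≤ l, Pz.coeff j = (Bz * Polynomial.X ^ 2).coeff j) :
    (Px ^ 2 + Py ^ 2 * Pz + Py * Pz ^ 2).coeff l
      = (Bx ^ 2 + By ^ 2 * Bz + By * Bz ^ 2).coeff (l - 6) := by
  simp only [Polynomial.coeff_add]
  have e1 : (Px ^ 2).coeff l = (Bx ^ 2).coeff (l - 6) := by
    rw [pow_two, pow_two, coeff_mul_congr' Px Px _ _ l keyx keyx,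
      show (Bx * Polynomial.X ^ 3) * (Bx * Polynomial.X ^ 3)
        = (Bx * Bx) * Polynomial.X ^ 6 by ring,
      Polynomial.coeff_mul_X_pow', if_pos hl6]
  have e2 : (Py ^ 2 * Pz).coeff l = (By ^ 2 * Bz).coeff (l - 6) := by
    have h1 : ∀ j ≤ l, (Py ^ 2).coeff j = ((By * Polynomial.X ^ 2) ^ 2).coeff j := by
      intro j hj
      rw [pow_two, pow_two]
      exact coeff_mul_congr' _ _ _ _ j (fun i hi => keyy i (le_trans hi hj))
        (fun i hi => keyy i (le_trans hi hj))
    rw [coeff_mul_congr' _ _ ((By * Polynomial.X ^ 2) ^ 2) (Bz * Polynomial.X ^ 2) l h1 keyz,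
      show ((By * Polynomial.X ^ 2) ^ 2) * (Bz * Polynomial.X ^ 2)
        = (By ^ 2 * Bz) * Polynomial.X ^ 6 by ring,
      Polynomial.coeff_mul_X_pow', if_pos hl6]
  have e3 : (Py * Pz ^ 2).coeff l = (By * Bz ^ 2).coeff (l - 6) := by
    have h1 : ∀ j ≤ l, (Pz ^ 2).coeff j = ((Bz * Polynomial.X ^ 2) ^ 2).coeff j := by
      intro j hj
      rw [pow_two, pow_two]
      exact coeff_mul_congr' _ _ _ _ j (fun i hi => keyz i (le_trans hi hj))
        (fun i hi => keyz i (le_trans hi hj))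
    rw [coeff_mul_congr' _ _ (By * Polynomial.X ^ 2) ((Bz * Polynomial.X ^ 2) ^ 2) l keyy h1,
      show (By * Polynomial.X ^ 2) * ((Bz * Polynomial.X ^ 2) ^ 2)
        = (By * Bz ^ 2) * Polynomial.X ^ 6 by ring,
      Polynomial.coeff_mul_X_pow', if_pos hl6]
  rw [e1, e2, e3]

lemma serUpTo_coeff' (k : Type*) [Field k] (c : ℕ → MvPolynomial (Fin 3 × ℕ) k) (m j : ℕ) :
    (serUpTo k c m).coeff j = if j ≤ m then c j else 0 := by
  rw [serUpTo, Polynomial.finset_sum_coeff]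
  simp only [Polynomial.coeff_C_mul, Polynomial.coeff_X_pow]
  rw [Finset.sum_congr rfl (fun i _ => by rw [mul_ite, mul_one, mul_zero]),
    Finset.sum_ite_eq (Finset.range (m+1)) j c]
  simp [Nat.lt_succ_iff]

/-- For `6 ≤ l ≤ m`, modulo `L_{322} = (x_0,x_1,x_2,y_0,y_1,z_0,z_1)` the
coefficient `f^{(l)}` is congruent to `f^{(l-6)}(x_3,...,x_{l-3},
y_2,...,y_{l-4}, z_2,...,z_{l-4})`, i.e. to `f^{(l-6)}` with variables shifted
by the weights `(3,2,2)`. -/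
theorem fCoeff_mod_L322_shift (k : Type*) [Field k] [CharP k 2] (m l : ℕ)
    (hm : 6 ≤ m) (hl6 : 6 ≤ l) (hlm : l ≤ m) :
    fCoeff k m l - MvPolynomial.rename wtShift (fCoeff k m (l - 6))
      ∈ Ideal.span
        {xv k 0, xv k 1, xv k 2, yv k 0, yv k 1, zv k 0, zv k 1} := by
  rw [← Ideal.Quotient.eq]
  set I : Ideal (MvPolynomial (Fin 3 × ℕ) k) :=
    Ideal.span {xv k 0, xv k 1, xv k 2, yv k 0, yv k 1, zv k 0, zv k 1} with hI
  let Q : MvPolynomial (Fin 3 × ℕ) k →+* (MvPolynomial (Fin 3 × ℕ) k ⧸ I) :=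
    Ideal.Quotient.mk I
  let φ : MvPolynomial (Fin 3 × ℕ) k →+* (MvPolynomial (Fin 3 × ℕ) k ⧸ I) :=
    Q.comp (MvPolynomial.rename wtShift).toRingHom
  have hmem : ∀ p ∈ ({xv k 0, xv k 1, xv k 2, yv k 0, yv k 1, zv k 0, zv k 1} :
      Set (MvPolynomial (Fin 3 × ℕ) k)), Q p = 0 := fun p hp =>
    Ideal.Quotient.eq_zero_iff_mem.2 (Ideal.subset_span hp)
  have hx0 : Q (xv k 0) = 0 := hmem _ (by simp)
  have hx1 : Q (xv k 1) = 0 := hmem _ (by simp)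
  have hx2 : Q (xv k 2) = 0 := hmem _ (by simp)
  have hy0 : Q (yv k 0) = 0 := hmem _ (by simp)
  have hy1 : Q (yv k 1) = 0 := hmem _ (by simp)
  have hz0 : Q (zv k 0) = 0 := hmem _ (by simp)
  have hz1 : Q (zv k 1) = 0 := hmem _ (by simp)
  have hφx : ∀ v, φ (xv k v) = Q (xv k (v + 3)) := by
    intro v
    show Q (MvPolynomial.rename wtShift (xv k v)) = _
    rw [xv, MvPolynomial.rename_X]
    congr 1
  have hφy : ∀ v, φ (yv k v) = Q (yv k (v + 2)) := by
    intro v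
    show Q (MvPolynomial.rename wtShift (yv k v)) = _
    rw [yv, MvPolynomial.rename_X]
    congr 1
  have hφz : ∀ v, φ (zv k v) = Q (zv k (v + 2)) := by
    intro v
    show Q (MvPolynomial.rename wtShift (zv k v)) = _
    rw [zv, MvPolynomial.rename_X]
    congr 1
  have keyx : ∀ j ≤ l, (Polynomial.map Q (serUpTo k (xv k) m)).coeff j
      = (Polynomial.map φ (serUpTo k (xv k) m) * Polynomial.X ^ 3).coeff j := by
    intro j hj
    rw [Polynomial.coeff_map, serUpTo_coeff', if_pos (show j ≤ m by omega),
      Polynomial.coeff_mul_X_pow']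
    by_cases h3 : 3 ≤ j
    · rw [if_pos h3, Polynomial.coeff_map, serUpTo_coeff',
        if_pos (show j - 3 ≤ m by omega), hφx]
      congr 2
      omega
    · rw [if_neg h3]
      interval_cases j
      · exact hx0
      · exact hx1
      · exact hx2
  have keyy : ∀ j ≤ l, (Polynomial.map Q (serUpTo k (yv k) m)).coeff j
      = (Polynomial.map φ (serUpTo k (yv k) m) * Polynomial.X ^ 2).coeff j := by
    intro j hj
    rw [Polynomial.coeff_map, serUpTo_coeff', if_pos (show j ≤ m by omega),
      Polynomial.coeff_mul_X_pow']
    by_cases h2 : 2 ≤ j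
    · rw [if_pos h2, Polynomial.coeff_map, serUpTo_coeff',
        if_pos (show j - 2 ≤ m by omega), hφy]
      congr 2
      omega
    · rw [if_neg h2]
      interval_cases j
      · exact hy0
      · exact hy1
  have keyz : ∀ j ≤ l, (Polynomial.map Q (serUpTo k (zv k) m)).coeff j
      = (Polynomial.map φ (serUpTo k (zv k) m) * Polynomial.X ^ 2).coeff j := by
    intro j hj
    rw [Polynomial.coeff_map, serUpTo_coeff', if_pos (show j ≤ m by omega),
      Polynomial.coeff_mul_X_pow']
    by_cases h2 : 2 ≤ j
    · rw [if_pos h2, Polynomial.coeff_map, serUpTo_coeff',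
        if_pos (show j - 2 ≤ m by omega), hφz]
      congr 2
      omega
    · rw [if_neg h2]
      interval_cases j
      · exact hz0
      · exact hz1
  have lhs : Q (fCoeff k m l)
      = ((Polynomial.map Q (serUpTo k (xv k) m)) ^ 2
        + (Polynomial.map Q (serUpTo k (yv k) m)) ^ 2 * Polynomial.map Q (serUpTo k (zv k) m)
        + Polynomial.map Q (serUpTo k (yv k) m)
          * (Polynomial.map Q (serUpTo k (zv k) m)) ^ 2).coeff l := by
    rw [fCoeff, ← Polynomial.coeff_map]
    rw [Polynomial.map_add, Polynomial.map_add, Polynomial.map_mul, Polynomial.map_mul,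
      Polynomial.map_pow, Polynomial.map_pow, Polynomial.map_pow]
  have rhs : Q (MvPolynomial.rename wtShift (fCoeff k m (l - 6)))
      = ((Polynomial.map φ (serUpTo k (xv k) m)) ^ 2
        + (Polynomial.map φ (serUpTo k (yv k) m)) ^ 2 * Polynomial.map φ (serUpTo k (zv k) m)
        + Polynomial.map φ (serUpTo k (yv k) m)
          * (Polynomial.map φ (serUpTo k (zv k) m)) ^ 2).coeff (l - 6) := by
    have : Q (MvPolynomial.rename wtShift (fCoeff k m (l - 6)))
        = φ (fCoeff k m (l - 6)) := rfl
    rw [this, fCoeff, ← Polynomial.coeff_map]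
    rw [Polynomial.map_add, Polynomial.map_add, Polynomial.map_mul, Polynomial.map_mul,
      Polynomial.map_pow, Polynomial.map_pow, Polynomial.map_pow]
  show Q (fCoeff k m l) = Q (MvPolynomial.rename wtShift (fCoeff k m (l - 6)))
  rw [lhs, rhs]
  exact main_calc' _ _ _ _ _ _ l hl6 keyx keyy keyz
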